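/- Let G be a finite noncyclic group. A proper subgroup H of G appears in some irredundant cover of G (a collection of proper subgroups whose union is G and containing no proper subcover) if and only if H contains a maximal cyclic subgroup of G (a cyclic subgroup not contained in any strictly larger cyclic subgroup). -/

import Mathlib

/-- A cover of a group: a finite collection of proper subgroups whose union is the group. -/
def IsCover {G : Type*} [Group G] (S : Finset (Subgroup G)) : Prop :=
  (∀ H ∈ S, H ≠ ⊤) ∧ ∀ g : G, ∃ H ∈ S, g ∈ H

/-- An irredundant cover: a cover with no proper subcollection that is also a cover. -/
def IsIrredundantCover {G : Type*} [Group G] (S : Finset (Subgroup G)) : Prop :=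
  IsCover S ∧ ∀ T : Finset (Subgroup G), T ⊂ S → ¬ IsCover T

/-- β(G): the number of irredundant covers of G. -/
noncomputable def beta (G : Type*) [Group G] : ℕ :=
  Nat.card {S : Finset (Subgroup G) // IsIrredundantCover S}

/-- A maximal cyclic subgroup: cyclic, and not contained in any strictly larger cyclic subgroup. -/
def IsMaximalCyclic {G : Type*} [Group G] (C : Subgroup G) : Prop :=
  IsCyclic ↥C ∧ ∀ D : Subgroup G, IsCyclic ↥D → C ≤ D → D = C

/-- A cyclically embedded subgroup: ⟨N, x⟩ is cyclic for all x. -/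
def CyclicallyEmbedded {G : Type*} [Group G] (N : Subgroup G) : Prop :=
  ∀ x : G, IsCyclic ↥(N ⊔ Subgroup.zpowers x)

lemma isCyclic_zpowers {G : Type*} [Group G] (g : G) : IsCyclic ↥(Subgroup.zpowers g) := by
  refine ⟨⟨⟨g, Subgroup.mem_zpowers g⟩, ?_⟩⟩
  rintro ⟨y, hy⟩
  obtain ⟨n, rfl⟩ := Subgroup.mem_zpowers_iff.mp hy
  exact ⟨n, by ext; simp⟩

lemma maxcyclic_gen {G : Type*} [Group G] {C : Subgroup G} (hC : IsCyclic ↥C) :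
    ∃ c : G, C = Subgroup.zpowers c := by
  obtain ⟨⟨c, hcC⟩, hgen⟩ := hC.exists_generator
  refine ⟨c, le_antisymm ?_ (Subgroup.zpowers_le.mpr hcC)⟩
  intro x hx
  obtain ⟨n, hn⟩ := Subgroup.mem_zpowers_iff.mp (hgen ⟨x, hx⟩)
  exact Subgroup.mem_zpowers_iff.mpr ⟨n, congrArg Subtype.val hn⟩

lemma exists_maxcyclic_mem {G : Type*} [Group G] [Finite G] (g : G) :
    ∃ C : Subgroup G, IsMaximalCyclic C ∧ g ∈ C := by
  have hs : ({D : Subgroup G | IsCyclic ↥D ∧ g ∈ D}).Finite := Set.toFinite _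
  obtain ⟨C, hCmem, hCmax⟩ := Set.Finite.exists_maximalFor id _ hs
    ⟨Subgroup.zpowers g, isCyclic_zpowers g, Subgroup.mem_zpowers g⟩
  refine ⟨C, ⟨hCmem.1, fun D hD hle => ?_⟩, hCmem.2⟩
  exact le_antisymm (hCmax (show D ∈ {D : Subgroup G | IsCyclic ↥D ∧ g ∈ D} from ⟨hD, hle hCmem.2⟩) hle) hle

lemma cyclic_ne_top {G : Type*} [Group G] (hG : ¬ IsCyclic G) {D : Subgroup G}
    (hD : IsCyclic ↥D) : D ≠ ⊤ := by
  rintro rfl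
  exact hG (isCyclic_of_surjective Subgroup.topEquiv.toMonoidHom Subgroup.topEquiv.surjective)

lemma exists_min_subcover {α : Type*} (P : Finset α → Prop) :
    ∀ n (T : Finset α), T.card = n → P T →
      ∃ T', T' ⊆ T ∧ P T' ∧ ∀ U, U ⊂ T' → ¬ P U := by
  intro n
  induction n using Nat.strong_induction_on with
  | _ n ih =>
    intro T hcard hT
    by_cases h : ∃ U, U ⊂ T ∧ P U
    · obtain ⟨U, hUT, hU⟩ := h
      obtain ⟨T', hT'U, hPT', hmin⟩ :=
        ih U.card (hcard ▸ Finset.card_lt_card hUT) U rfl hU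
      exact ⟨T', hT'U.trans hUT.subset, hPT', hmin⟩
    · push_neg at h
      exact ⟨T, le_refl _, hT, h⟩

theorem stmt0 {G : Type*} [Group G] [Finite G] (hG : ¬ IsCyclic G)
    (H : Subgroup G) (hH : H ≠ ⊤) :
    (∃ S : Finset (Subgroup G), IsIrredundantCover S ∧ H ∈ S) ↔
      ∃ C : Subgroup G, IsMaximalCyclic C ∧ C ≤ H := by
  classical
  constructor
  · rintro ⟨S, ⟨⟨hproper, hcov⟩, hirr⟩, hHS⟩
    have h1 : ¬ IsCover (S.erase H) := hirr _ (Finset.erase_ssubset hHS)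
    have h2 : ∃ g : G, ∀ K ∈ S.erase H, g ∉ K := by
      by_contra h; push_neg at h
      exact h1 ⟨fun K hK => hproper K (Finset.mem_of_mem_erase hK), h⟩
    obtain ⟨g, hg⟩ := h2
    obtain ⟨C, hC, hgC⟩ := exists_maxcyclic_mem g
    refine ⟨C, hC, ?_⟩
    obtain ⟨c, rfl⟩ := maxcyclic_gen hC.1
    obtain ⟨K, hKS, hcK⟩ := hcov c
    have hKH : K = H := by
      by_contra hne
      exact hg K (Finset.mem_erase.mpr ⟨hne, hKS⟩) (Subgroup.zpowers_le.mpr hcK hgC)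
    exact Subgroup.zpowers_le.mpr (hKH ▸ hcK)
  · rintro ⟨C, hC, hCH⟩
    obtain ⟨c, rfl⟩ := maxcyclic_gen hC.1
    -- base cover: H together with all maximal cyclic subgroups not containing c
    set T₀ : Finset (Subgroup G) :=
      insert H ((Set.toFinite {D : Subgroup G | IsMaximalCyclic D ∧ c ∉ D}).toFinset) with hT₀
    have hcov₀ : IsCover T₀ := by
      constructor
      · intro K hK
        rcases Finset.mem_insert.mp hK with rfl | hK
        · exact hH
        · exact cyclic_ne_top hG ((Set.Finite.mem_toFinset _).mp hK).1.1
      · intro x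
        obtain ⟨D, hD, hxD⟩ := exists_maxcyclic_mem x
        by_cases hcD : c ∈ D
        · have : D = Subgroup.zpowers c :=
            hC.2 D hD.1 (Subgroup.zpowers_le.mpr hcD)
          exact ⟨H, Finset.mem_insert_self _ _, hCH (this ▸ hxD)⟩
        · exact ⟨D, Finset.mem_insert_of_mem ((Set.Finite.mem_toFinset _).mpr ⟨hD, hcD⟩), hxD⟩
    obtain ⟨T', hT'sub, hT'cov, hT'min⟩ :=
      exists_min_subcover IsCover T₀.card T₀ rfl hcov₀
    refine ⟨T', ⟨hT'cov, fun U hU => hT'min U hU⟩, ?_⟩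
    -- H ∈ T' since c can only be covered by H
    obtain ⟨K, hKT', hcK⟩ := hT'cov.2 c
    rcases Finset.mem_insert.mp (hT'sub hKT') with rfl | hK
    · exact hKT'
    · exact absurd hcK ((Set.Finite.mem_toFinset _).mp hK).2
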